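/- For the water-filling solution over M slots: minimizing Σₘ Pₘ subject to Σₘ log2(1 + βₘ Pₘ) ≥ C with Pₘ ≥ 0 and β₁ ≥ β₂ ≥ … ≥ β_M > 0, any optimal solution satisfies: if Pₘ > 0 and βₖ > βₘ then Pₖ > 0 (power is allocated to the better channels first). -/

import Mathlib

theorem stmt_14 (M : ℕ) (β : Fin M → ℝ) (hβ : ∀ m, 0 < β m) (C : ℝ) (hC : 0 < C)
    (Pv : Fin M → ℝ) (hPv : ∀ m, 0 ≤ Pv m)
    (hfeas : C ≤ ∑ m, Real.logb 2 (1 + β m * Pv m))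
    (hopt : ∀ Q : Fin M → ℝ, (∀ m, 0 ≤ Q m) →
      C ≤ ∑ m, Real.logb 2 (1 + β m * Q m) → ∑ m, Pv m ≤ ∑ m, Q m) :
    ∀ k m : Fin M, 0 < Pv m → β m < β k → 0 < Pv k := by
  intro k m hm hβlt
  by_contra hk
  have hPk : Pv k = 0 := le_antisymm (not_lt.mp hk) (hPv k)
  have hkm : k ≠ m := by
    rintro rfl; exact lt_irrefl _ hβlt
  set a : ℝ := β m / β k * Pv m with ha_def
  have ha : 0 ≤ a := mul_nonneg (div_nonneg (hβ m).le (hβ k).le) (hPv m)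
  have halt : a < Pv m := by
    have h1 : β m / β k < 1 := (div_lt_one (hβ k)).mpr hβlt
    calc a < 1 * Pv m := by exact mul_lt_mul_of_pos_right h1 hm
    _ = Pv m := one_mul _
  have hba : β k * a = β m * Pv m := by
    calc β k * a = (β m / β k * β k) * Pv m := by rw [ha_def]; ring
    _ = β m * Pv m := by rw [div_mul_cancel₀ _ (hβ k).ne']
  set Q : Fin M → ℝ := fun i => if i = k then a else if i = m then 0 else Pv i with hQ
  have hQnn : ∀ i, 0 ≤ Q i := by
    intro i
    simp only [hQ]
    split_ifs with h1 h2
    · exact ha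
    · exact le_refl 0
    · exact hPv i
  have key : ∀ f g : Fin M → ℝ, (∀ i, i ≠ k → i ≠ m → f i = g i) →
      ∑ i, f i - ∑ i, g i = (f k - g k) + (f m - g m) := by
    intro f g h
    have h2 : ∑ i, (f i - g i) = ∑ i ∈ ({k, m} : Finset (Fin M)), (f i - g i) := by
      refine (Finset.sum_subset (Finset.subset_univ _) ?_).symm
      intro i _ hi
      simp only [Finset.mem_insert, Finset.mem_singleton, not_or] at hi
      rw [h i hi.1 hi.2]; ring
    rw [← Finset.sum_sub_distrib, h2, Finset.sum_pair hkm]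
  have hrate : ∑ i, Real.logb 2 (1 + β i * Q i) = ∑ i, Real.logb 2 (1 + β i * Pv i) := by
    have := key (fun i => Real.logb 2 (1 + β i * Q i)) (fun i => Real.logb 2 (1 + β i * Pv i))
      (by intro i h1 h2; simp [hQ, h1, h2])
    have hQk : Q k = a := by simp [hQ]
    have hQm : Q m = 0 := by simp [hQ, hkm.symm]
    rw [hQk, hQm, hPk] at this
    rw [hba, mul_zero, mul_zero] at this
    linarith [this]
  have hsum : ∑ i, Q i - ∑ i, Pv i = a - Pv m := by
    have := key Q Pv (by intro i h1 h2; simp [hQ, h1, h2])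
    have hQk : Q k = a := by simp [hQ]
    have hQm : Q m = 0 := by simp [hQ, hkm.symm]
    rw [hQk, hQm, hPk] at this
    linarith [this]
  have := hopt Q hQnn (by rw [hrate]; exact hfeas)
  linarith
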